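/- For every integer p there exists a constant C > 0 such that for all real Λ ≥ 2: |∫_{1/Λ²}^{∞} e^{−αm²}·(∑_{q ∈ ℤ⁴} e^{−α(p² + q₁²+q₂²+q₃²+q₄² + (p+S(q))²)}) dα − (π²/√5)·(Λ² − 2(m² + (6/5)p²)·log Λ)| ≤ C. (This is the asymptotic expansion, in the Schwinger-parametric cutoff Λ, of the one-loop melonic self-energy of the model: the quadratic divergence has coefficient π²/√5, the mass logarithmic divergence has coefficient −2π²m²/√5, and the wave-function logarithmic divergence has coefficient −(12π²/(5√5))p² per color.) -/

import Mathlib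

open MeasureTheory
open scoped BigOperators

noncomputable section
open Real Complex Set


lemma summable_gauss_nat {a : ℝ} (ha : 0 < a) : Summable (fun n : ℕ => Real.exp (-a * (n:ℝ)^2)) := by
  apply Summable.of_nonneg_of_le (fun n => (Real.exp_pos _).le)
    (f := fun n : ℕ => (Real.exp (-a))^n) ?_
    (summable_geometric_of_lt_one (Real.exp_pos _).le (Real.exp_lt_one_iff.2 (by linarith)))
  intro n
  beta_reduce
  rw [← Real.exp_nat_mul]
  apply Real.exp_le_exp.2
  have h1 : (n:ℝ) ≤ (n:ℝ)^2 := by exact_mod_cast Nat.le_self_pow two_ne_zero n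
  nlinarith

lemma summable_gauss_int {a : ℝ} (ha : 0 < a) : Summable (fun n : ℤ => Real.exp (-a * (n:ℝ)^2)) := by
  apply (summable_int_iff_summable_nat_and_neg).2
  constructor
  · exact_mod_cast summable_gauss_nat ha
  · have := summable_gauss_nat ha
    apply this.congr
    intro n; push_cast; ring_nf

lemma summable_gauss_shift {a x : ℝ} (ha : 0 < a) :
    Summable (fun n : ℤ => Real.exp (-a * ((n:ℝ) + x)^2)) := by
  apply Summable.of_nonneg_of_le (fun n => (Real.exp_pos _).le)
    (f := fun n : ℤ => Real.exp (a * x^2) * Real.exp (-(a/2) * (n:ℝ)^2)) ?_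
    ((summable_gauss_int (by linarith)).mul_left _)
  intro n
  beta_reduce
  rw [← Real.exp_add]
  apply Real.exp_le_exp.2
  nlinarith [sq_nonneg ((n:ℝ) + 2*x)]



lemma nat_tail {c : ℝ} (hc : Real.log 2 ≤ c) :
    ∑' n : ℕ, Real.exp (-c * ((n:ℝ)+1)^2) ≤ 2 * Real.exp (-c) := by
  have hc0 : 0 < c := lt_of_lt_of_le (Real.log_pos (by norm_num)) hc
  set r := Real.exp (-c) with hr
  have hr0 : 0 < r := Real.exp_pos _
  have hr2 : r ≤ 1/2 := by
    rw [hr, show (1/2 : ℝ) = Real.exp (-Real.log 2) by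
      rw [Real.exp_neg, Real.exp_log]; norm_num; norm_num]
    exact Real.exp_le_exp.2 (by linarith)
  have hgeom : Summable (fun n : ℕ => r ^ (n+1)) := by
    apply Summable.comp_injective ?_ (add_left_injective 1)
    exact summable_geometric_of_lt_one hr0.le (by linarith)
  have hle : ∀ n : ℕ, Real.exp (-c * ((n:ℝ)+1)^2) ≤ r ^ (n+1) := by
    intro n
    rw [hr, ← Real.exp_nat_mul]
    apply Real.exp_le_exp.2
    push_cast
    have h1 : (n:ℝ) + 1 ≤ ((n:ℝ)+1)^2 := by nlinarith [Nat.cast_nonneg (α := ℝ) n]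
    nlinarith
  calc ∑' n : ℕ, Real.exp (-c * ((n:ℝ)+1)^2) ≤ ∑' n : ℕ, r ^ (n+1) :=
        Summable.tsum_le_tsum hle (Summable.of_nonneg_of_le (fun n => (Real.exp_pos _).le) hle hgeom) hgeom
    _ = r * (1 - r)⁻¹ := by
        rw [show (fun n : ℕ => r ^ (n+1)) = fun n : ℕ => r * r ^ n by funext n; ring,
          tsum_mul_left, tsum_geometric_of_lt_one hr0.le (by linarith)]
    _ ≤ 2 * r := by
        rw [mul_comm]
        apply mul_le_mul_of_nonneg_right _ hr0.le
        rw [inv_le_comm₀ (by linarith) (by norm_num)]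
        linarith



lemma theta_bound {a x : ℝ} (ha : 0 < a) (ha2 : a ≤ 2) :
    |(∑' n : ℤ, Real.exp (-a * ((n:ℝ) + x)^2)) - Real.sqrt (π / a)| ≤
      Real.sqrt (π / a) * (4 * Real.exp (-π^2 / a)) := by
  have hπ := Real.pi_pos
  have hπne : (π:ℂ) ≠ 0 := Complex.ofReal_ne_zero.2 (ne_of_gt hπ)
  have hane : (a:ℂ) ≠ 0 := Complex.ofReal_ne_zero.2 (ne_of_gt ha)
  -- the dual sum
  set g : ℤ → ℂ := fun n => Complex.exp
      (((-π^2 / a * (n:ℝ)^2 : ℝ) : ℂ) + ((2 * π * x * (n:ℝ) : ℝ) : ℂ) * I) with hg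
  have hgnorm : ∀ n : ℤ, ‖g n‖ = Real.exp (-π^2 / a * (n:ℝ)^2) := by
    intro n
    rw [hg]
    beta_reduce
    rw [Complex.norm_exp]
    congr 1
    simp only [Complex.add_re, Complex.ofReal_re, Complex.mul_re, Complex.I_re,
      Complex.ofReal_im, Complex.I_im]
    ring
  have hgsum : Summable g := by
    apply Summable.of_norm
    simp_rw [hgnorm]
    exact (summable_gauss_int (a := π^2/a) (by positivity)).congr (fun n => by rw [neg_div])
  -- Poisson summation / theta transformation
  have key := Complex.tsum_exp_neg_quadratic
    (a := ((a/π : ℝ) : ℂ)) (by rw [Complex.ofReal_re]; positivity) (((-(a*x)/π : ℝ) : ℂ))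
  -- rewrite LHS of key
  have hL : (fun n : ℤ => Complex.exp (-π * ((a/π : ℝ) : ℂ) * (n:ℂ)^2
        + 2 * π * ((-(a*x)/π : ℝ) : ℂ) * (n:ℂ)))
      = fun n : ℤ => Complex.exp ((a * x^2 : ℝ) : ℂ) *
          Complex.exp (-(a:ℂ) * ((n:ℂ) + (x:ℂ))^2) := by
    funext n
    rw [← Complex.exp_add]
    congr 1
    push_cast
    field_simp
    ring
  -- rewrite RHS of key
  have hR : (fun n : ℤ => Complex.exp (-(π:ℂ) / ((a/π : ℝ) : ℂ) * ((n:ℂ) + I * ((-(a*x)/π : ℝ) : ℂ))^2))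
      = fun n : ℤ => Complex.exp ((a * x^2 : ℝ) : ℂ) * g n := by
    funext n
    rw [hg, ← Complex.exp_add]
    congr 1
    push_cast
    have hI := Complex.I_sq
    field_simp
    ring_nf
    rw [Complex.I_sq]
    ring
  rw [hL, hR, tsum_mul_left, tsum_mul_left] at key
  have hexpne : Complex.exp ((a * x^2 : ℝ) : ℂ) ≠ 0 := Complex.exp_ne_zero _
  -- coefficient is real sqrt
  have hcoef : 1 / (((a/π : ℝ) : ℂ) ^ (1/2 : ℂ)) = ((Real.sqrt (π / a) : ℝ) : ℂ) := by
    rw [show (1/2 : ℂ) = ((1/2 : ℝ) : ℂ) by norm_num,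
      ← Complex.ofReal_cpow (by positivity), ← Real.sqrt_eq_rpow]
    rw [show Real.sqrt (π/a) = (Real.sqrt (a/π))⁻¹ by
      rw [← Real.sqrt_inv, inv_div]]
    push_cast [one_div]
    rfl
  rw [hcoef] at key
  have key2 : ((∑' n : ℤ, Real.exp (-a * ((n:ℝ) + x)^2) : ℝ) : ℂ)
      = ((Real.sqrt (π / a) : ℝ) : ℂ) * ∑' n : ℤ, g n := by
    rw [Complex.ofReal_tsum]
    have : ∀ n : ℤ, ((Real.exp (-a * ((n:ℝ) + x)^2) : ℝ) : ℂ)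
        = Complex.exp (-(a:ℂ) * ((n:ℂ) + (x:ℂ))^2) := by
      intro n; rw [Complex.ofReal_exp]; push_cast; ring_nf
    simp_rw [this]
    have key' : (∑' n : ℤ, Complex.exp (-(a:ℂ) * ((n:ℂ) + (x:ℂ))^2))
        = ((Real.sqrt (π / a) : ℝ) : ℂ) * ∑' n, g n := by
      apply mul_left_cancel₀ hexpne
      rw [key]; ring
    exact key'
  set s := Real.sqrt (π / a) with hs
  have hs0 : (0:ℝ) ≤ s := Real.sqrt_nonneg _
  set S := ∑' n : ℤ, g n with hS
  have hF : (∑' n : ℤ, Real.exp (-a * ((n:ℝ) + x)^2)) = s * S.re := by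
    have := congrArg Complex.re key2
    rwa [Complex.ofReal_re, Complex.re_ofReal_mul] at this
  -- split the dual sum
  have hsum1 : Summable (fun n : ℕ => g n) := hgsum.comp_injective (fun i j hij => by exact_mod_cast hij)
  have hsum1' : Summable (fun n : ℕ => g ((n:ℤ)+1)) := by
    apply hgsum.comp_injective
    intro i j hij; simpa using hij
  have hsum2 : Summable (fun n : ℕ => g (-((n:ℤ)+1))) := by
    apply hgsum.comp_injective
    intro i j hij
    simp only [neg_inj, add_left_inj] at hij
    exact_mod_cast hij
  have hg0 : g 0 = 1 := by
    rw [hg]; beta_reduce; norm_num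
  have hsplit : S = 1 + (∑' n : ℕ, g ((n:ℤ)+1) + ∑' n : ℕ, g (-((n:ℤ)+1))) := by
    rw [hS, tsum_of_nat_of_neg_add_one hsum1 hsum2, hsum1.tsum_eq_zero_add]
    push_cast
    rw [hg0]
    ring
  have hlog : Real.log 2 ≤ π^2/a := by
    have h1 : Real.log 2 ≤ 1 := by
      have := Real.log_le_sub_one_of_pos (x := 2) (by norm_num)
      linarith
    have h2 : (3:ℝ) ≤ π := by linarith [Real.pi_gt_three]
    have : (9:ℝ)/2 ≤ π^2/a := by
      apply div_le_div₀ (by nlinarith) (by nlinarith) ha ha2 |>.trans_eq rfl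
    linarith
  have htail : ∀ f : ℕ → ℂ, Summable f → (∀ n : ℕ, ‖f n‖ = Real.exp (-(π^2/a) * ((n:ℝ)+1)^2)) →
      ‖∑' n : ℕ, f n‖ ≤ 2 * Real.exp (-π^2/a) := by
    intro f hf hfn
    calc ‖∑' n : ℕ, f n‖ ≤ ∑' n : ℕ, ‖f n‖ := norm_tsum_le_tsum_norm hf.norm
      _ = ∑' n : ℕ, Real.exp (-(π^2/a) * ((n:ℝ)+1)^2) := by simp_rw [hfn]
      _ ≤ 2 * Real.exp (-(π^2/a)) := nat_tail hlog
      _ = 2 * Real.exp (-π^2/a) := by rw [neg_div]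
  have hb1 : ‖∑' n : ℕ, g ((n:ℤ)+1)‖ ≤ 2 * Real.exp (-π^2/a) := by
    apply htail _ hsum1'
    intro n
    rw [hgnorm]
    push_cast
    rw [neg_div]
  have hb2 : ‖∑' n : ℕ, g (-((n:ℤ)+1))‖ ≤ 2 * Real.exp (-π^2/a) := by
    apply htail _ hsum2
    intro n
    rw [hgnorm]
    push_cast
    rw [neg_div]
    ring_nf
  have hSre : |S.re - 1| ≤ 4 * Real.exp (-π^2/a) := by
    have h1 : |S.re - 1| ≤ ‖S - 1‖ := by
      have := Complex.abs_re_le_norm (S - 1)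
      rwa [Complex.sub_re, Complex.one_re] at this
    have h2 : ‖S - 1‖ ≤ 4 * Real.exp (-π^2/a) := by
      rw [hsplit]
      rw [show (1:ℂ) + (∑' n : ℕ, g ((n:ℤ)+1) + ∑' n : ℕ, g (-((n:ℤ)+1))) - 1
        = (∑' n : ℕ, g ((n:ℤ)+1)) + ∑' n : ℕ, g (-((n:ℤ)+1)) by ring]
      calc _ ≤ ‖∑' n : ℕ, g ((n:ℤ)+1)‖ + ‖∑' n : ℕ, g (-((n:ℤ)+1))‖ := norm_add_le _ _
        _ ≤ 2 * Real.exp (-π^2/a) + 2 * Real.exp (-π^2/a) := add_le_add hb1 hb2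
        _ = 4 * Real.exp (-π^2/a) := by ring
    exact h1.trans h2
  rw [hF]
  have heq : s * S.re - s = s * (S.re - 1) := by ring
  rw [heq, abs_mul, _root_.abs_of_nonneg hs0]
  exact mul_le_mul_of_nonneg_left hSre hs0



lemma step_bound {α x j : ℝ} (hα : 0 < α) (hα1 : α ≤ 1) (hj : 1 ≤ j) (hj4 : j ≤ 4) :
    |(∑' n : ℤ, Real.exp (-α * ((n:ℝ)^2 + ((n:ℝ) + x)^2 / j)))
      - Real.sqrt (π * j / ((j+1) * α)) * Real.exp (-α * x^2 / (j+1))|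
    ≤ Real.sqrt (π * j / ((j+1) * α)) * Real.exp (-α * x^2 / (j+1))
        * (4 * Real.exp (-π^2 / (2*α))) := by
  have hj0 : 0 < j := by linarith
  have hj1 : 0 < j + 1 := by linarith
  set a := α * (j+1) / j with ha
  have ha0 : 0 < a := by positivity
  have ha2α : a ≤ 2 * α := by
    rw [ha, div_le_iff₀ hj0]
    nlinarith
  have ha2 : a ≤ 2 := by linarith
  set y := x / (j+1) with hy
  have hterm : ∀ n : ℤ, Real.exp (-α * ((n:ℝ)^2 + ((n:ℝ) + x)^2 / j))
      = Real.exp (-α * x^2 / (j+1)) * Real.exp (-a * ((n:ℝ) + y)^2) := by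
    intro n
    rw [← Real.exp_add]
    congr 1
    rw [ha, hy]
    field_simp
    ring
  rw [tsum_congr hterm, tsum_mul_left]
  have hsq : Real.sqrt (π / a) = Real.sqrt (π * j / ((j+1) * α)) := by
    congr 1
    rw [ha]
    field_simp
  set E := Real.exp (-α * x^2 / (j+1)) with hE
  have hE0 : 0 < E := Real.exp_pos _
  have h1 := theta_bound (x := y) ha0 ha2
  rw [hsq] at h1
  set s := Real.sqrt (π * j / ((j+1) * α)) with hs
  have hs0 : 0 ≤ s := Real.sqrt_nonneg _
  have heq : E * (∑' n : ℤ, Real.exp (-a * ((n:ℝ) + y)^2)) - s * E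
      = E * ((∑' n : ℤ, Real.exp (-a * ((n:ℝ) + y)^2)) - s) := by ring
  rw [heq, abs_mul, _root_.abs_of_nonneg hE0.le]
  have h2 : Real.exp (-π^2 / a) ≤ Real.exp (-π^2 / (2*α)) := by
    apply Real.exp_le_exp.2
    rw [neg_div, neg_div, neg_le_neg_iff]
    apply div_le_div_of_nonneg_left (by positivity) (by positivity) ha2α
  calc E * |(∑' n : ℤ, Real.exp (-a * ((n:ℝ) + y)^2)) - s|
      ≤ E * (s * (4 * Real.exp (-π^2 / a))) := mul_le_mul_of_nonneg_left h1 hE0.le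
    _ ≤ E * (s * (4 * Real.exp (-π^2 / (2*α)))) := by
        apply mul_le_mul_of_nonneg_left _ hE0.le
        apply mul_le_mul_of_nonneg_left _ hs0
        linarith
    _ = s * E * (4 * Real.exp (-π^2 / (2*α))) := by ring




/-- squeeze a weighted tsum between multiples of another -/
lemma tsum_squeeze {w f g : ℤ → ℝ} (hw : ∀ n, 0 ≤ w n) (hf0 : ∀ n, 0 ≤ f n)
    {c₁ c₂ : ℝ} (hc₂ : 0 ≤ c₂)
    (hlow : ∀ n, c₁ * g n ≤ f n) (hhigh : ∀ n, f n ≤ c₂ * g n)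
    (hgsum : Summable (fun n => w n * g n)) :
    c₁ * (∑' n, w n * g n) ≤ (∑' n, w n * f n) ∧
      (∑' n, w n * f n) ≤ c₂ * (∑' n, w n * g n) := by
  have hwf_le : ∀ n, w n * f n ≤ c₂ * (w n * g n) := fun n => by
    have h := mul_le_mul_of_nonneg_left (hhigh n) (hw n)
    nlinarith [h]
  have hfsum : Summable (fun n => w n * f n) :=
    Summable.of_nonneg_of_le (fun n => mul_nonneg (hw n) (hf0 n)) hwf_le (hgsum.mul_left c₂)
  constructor
  · rw [← tsum_mul_left]
    apply Summable.tsum_le_tsum (fun n => ?_) (hgsum.mul_left c₁) hfsum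
    have h := mul_le_mul_of_nonneg_left (hlow n) (hw n)
    nlinarith [h]
  · rw [← tsum_mul_left]
    exact Summable.tsum_le_tsum hwf_le hfsum (hgsum.mul_left c₂)

/-- summand of the reduced one-dimensional theta-like sums -/
def Aa (α j d : ℝ) : ℝ := ∑' n : ℤ, Real.exp (-α * ((n:ℝ)^2 + ((n:ℝ) + d)^2 / j))

def T2f (α d : ℝ) : ℝ := ∑' n : ℤ, Real.exp (-α * (n:ℝ)^2) * Aa α 1 (d + (n:ℝ))
def T3f (α d : ℝ) : ℝ := ∑' n : ℤ, Real.exp (-α * (n:ℝ)^2) * T2f α (d + (n:ℝ))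
def T4f (α d : ℝ) : ℝ := ∑' n : ℤ, Real.exp (-α * (n:ℝ)^2) * T3f α (d + (n:ℝ))

lemma Aa_summand_summable {α j d : ℝ} (hα : 0 < α) (hj : 0 < j) :
    Summable (fun n : ℤ => Real.exp (-α * ((n:ℝ)^2 + ((n:ℝ) + d)^2 / j))) := by
  apply Summable.of_nonneg_of_le (fun n => (Real.exp_pos _).le)
    (f := fun n : ℤ => Real.exp (-α * (n:ℝ)^2)) ?_ (summable_gauss_int hα)
  intro n
  apply Real.exp_le_exp.2
  have h : 0 ≤ ((n:ℝ) + d)^2 / j := by positivity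
  nlinarith

lemma Aa_nonneg (α j d : ℝ) : 0 ≤ Aa α j d := tsum_nonneg (fun n => (Real.exp_pos _).le)

lemma Aa_wE {α k : ℝ} (hk : k ≠ 0) (d : ℝ) (n : ℤ) :
    Real.exp (-α * (n:ℝ)^2) * Real.exp (-α * (d + (n:ℝ))^2 / k)
      = Real.exp (-α * ((n:ℝ)^2 + ((n:ℝ) + d)^2 / k)) := by
  rw [← Real.exp_add]
  congr 1
  field_simp
  ring

lemma T2f_nonneg (α d : ℝ) : 0 ≤ T2f α d :=
  tsum_nonneg (fun n => mul_nonneg (Real.exp_pos _).le (Aa_nonneg _ _ _))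
lemma T3f_nonneg (α d : ℝ) : 0 ≤ T3f α d :=
  tsum_nonneg (fun n => mul_nonneg (Real.exp_pos _).le (T2f_nonneg _ _))

lemma Aa_bounds {α j d : ℝ} (hα : 0 < α) (hα1 : α ≤ 1) (hj : 1 ≤ j) (hj4 : j ≤ 4) :
    (1 - 4 * Real.exp (-π^2/(2*α))) * (Real.sqrt (π * j / ((j+1) * α)) * Real.exp (-α * d^2 / (j+1)))
      ≤ Aa α j d ∧
    Aa α j d ≤ (1 + 4 * Real.exp (-π^2/(2*α)))
      * (Real.sqrt (π * j / ((j+1) * α)) * Real.exp (-α * d^2 / (j+1))) := by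
  have h := step_bound (x := d) hα hα1 hj hj4
  rw [abs_le] at h
  unfold Aa
  constructor <;> nlinarith [h.1, h.2]

lemma summable_w_g {α k C d : ℝ} (hα : 0 < α) (hk : 0 < k) :
    Summable (fun n : ℤ => Real.exp (-α * (n:ℝ)^2) * (C * Real.exp (-α * (d + (n:ℝ))^2 / k))) := by
  apply ((Aa_summand_summable (d := d) (j := k) hα hk).mul_left C).congr
  intro n
  rw [← Aa_wE (ne_of_gt hk) d n]
  ring

lemma tsum_w_g {α k C d : ℝ} (hα : 0 < α) (hk : 0 < k) :
    (∑' n : ℤ, Real.exp (-α * (n:ℝ)^2) * (C * Real.exp (-α * (d + (n:ℝ))^2 / k)))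
      = C * Aa α k d := by
  rw [show (fun n : ℤ => Real.exp (-α * (n:ℝ)^2) * (C * Real.exp (-α * (d + (n:ℝ))^2 / k)))
      = fun n : ℤ => C * Real.exp (-α * ((n:ℝ)^2 + ((n:ℝ) + d)^2 / k)) from ?_, tsum_mul_left]
  · rfl
  funext n
  rw [← Aa_wE (ne_of_gt hk) d n]
  ring

lemma chain_step {α : ℝ} (hα : 0 < α) {c₁ c₂ : ℝ} (hc₂ : 0 ≤ c₂) {F : ℝ → ℝ}
    (hF0 : ∀ d, 0 ≤ F d) {j : ℝ} (hj : 0 < j) {Q : ℝ}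
    (hlow : ∀ d, c₁ * (Q * Real.exp (-α * d^2 / j)) ≤ F d)
    (hhigh : ∀ d, F d ≤ c₂ * (Q * Real.exp (-α * d^2 / j))) (d : ℝ) :
    c₁ * (Q * Aa α j d) ≤ (∑' n : ℤ, Real.exp (-α * (n:ℝ)^2) * F (d + (n:ℝ))) ∧
    (∑' n : ℤ, Real.exp (-α * (n:ℝ)^2) * F (d + (n:ℝ))) ≤ c₂ * (Q * Aa α j d) := by
  have h := tsum_squeeze (w := fun n : ℤ => Real.exp (-α * (n:ℝ)^2))
    (f := fun n : ℤ => F (d + (n:ℝ)))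
    (g := fun n : ℤ => Q * Real.exp (-α * (d + (n:ℝ))^2 / j))
    (fun n => (Real.exp_pos _).le) (fun n => hF0 _) hc₂
    (fun n => hlow _) (fun n => hhigh _) (summable_w_g hα hj)
  rw [tsum_w_g hα hj] at h
  constructor
  · linarith [h.1]
  · linarith [h.2]

lemma T4_bounds {α : ℝ} (hα : 0 < α) (hα1 : α ≤ 1) (pr : ℝ) :
    (1 - 4*Real.exp (-π^2/(2*α)))^4 * (π^2/(Real.sqrt 5 * α^2) * Real.exp (-α*pr^2/5)) ≤ T4f α pr
  ∧ T4f α pr ≤ (1 + 4*Real.exp (-π^2/(2*α)))^4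
      * (π^2/(Real.sqrt 5 * α^2) * Real.exp (-α*pr^2/5)) := by
  have hπ := Real.pi_pos
  set δ := 4*Real.exp (-π^2/(2*α)) with hδ
  have hδ0 : 0 ≤ δ := by positivity
  have hδ1 : δ ≤ 1 := by
    rw [hδ]
    have h3 : (3:ℝ) ≤ π := by linarith [Real.pi_gt_three]
    have h1 : (9:ℝ)/2 ≤ π^2/(2*α) := by
      rw [div_le_div_iff₀ (by norm_num) (by positivity)]
      nlinarith
    have h2 : Real.exp (-π^2/(2*α)) ≤ Real.exp (-(9/2)) := by
      apply Real.exp_le_exp.2; rw [neg_div]; linarith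
    have h4 : Real.exp (-(9/2 : ℝ)) ≤ 2/11 := by
      have h5 : (11:ℝ)/2 ≤ Real.exp (9/2) := by
        have := Real.add_one_le_exp (9/2 : ℝ); linarith
      rw [Real.exp_neg]
      calc (Real.exp (9/2 : ℝ))⁻¹ ≤ ((11:ℝ)/2)⁻¹ := by
            apply inv_anti₀ (by norm_num) h5
        _ ≤ 2/11 := by norm_num
    linarith
  set P1 := Real.sqrt (π * 1 / ((1+1) * α)) with hP1
  set P2 := Real.sqrt (π * 2 / ((2+1) * α)) with hP2
  set P3 := Real.sqrt (π * 3 / ((3+1) * α)) with hP3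
  set P4 := Real.sqrt (π * 4 / ((4+1) * α)) with hP4
  have hP10 : 0 ≤ P1 := Real.sqrt_nonneg _
  have hP20 : 0 ≤ P2 := Real.sqrt_nonneg _
  have hP30 : 0 ≤ P3 := Real.sqrt_nonneg _
  have hP40 : 0 ≤ P4 := Real.sqrt_nonneg _
  have w_nonneg : ∀ n : ℤ, 0 ≤ Real.exp (-α * (n:ℝ)^2) := fun n => (Real.exp_pos _).le
  have h1δ : (0:ℝ) ≤ 1 - δ := by linarith
  have h1δ' : (0:ℝ) ≤ 1 + δ := by linarith
  -- level-wise bounds with clean numerals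
  have hA1 : ∀ d : ℝ, (1-δ) * (P1 * Real.exp (-α * d^2 / 2)) ≤ Aa α 1 d ∧
      Aa α 1 d ≤ (1+δ) * (P1 * Real.exp (-α * d^2 / 2)) := by
    intro d
    have h := Aa_bounds (j := 1) (d := d) hα hα1 le_rfl (by norm_num)
    rw [hP1, hδ]
    norm_num at h ⊢
    exact h
  have hA2 : ∀ d : ℝ, (1-δ) * (P2 * Real.exp (-α * d^2 / 3)) ≤ Aa α 2 d ∧
      Aa α 2 d ≤ (1+δ) * (P2 * Real.exp (-α * d^2 / 3)) := by
    intro d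
    have h := Aa_bounds (j := 2) (d := d) hα hα1 (by norm_num) (by norm_num)
    rw [hP2, hδ]
    norm_num at h ⊢
    exact h
  have hA3 : ∀ d : ℝ, (1-δ) * (P3 * Real.exp (-α * d^2 / 4)) ≤ Aa α 3 d ∧
      Aa α 3 d ≤ (1+δ) * (P3 * Real.exp (-α * d^2 / 4)) := by
    intro d
    have h := Aa_bounds (j := 3) (d := d) hα hα1 (by norm_num) (by norm_num)
    rw [hP3, hδ]
    norm_num at h ⊢
    exact h
  have hA4 : ∀ d : ℝ, (1-δ) * (P4 * Real.exp (-α * d^2 / 5)) ≤ Aa α 4 d ∧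
      Aa α 4 d ≤ (1+δ) * (P4 * Real.exp (-α * d^2 / 5)) := by
    intro d
    have h := Aa_bounds (j := 4) (d := d) hα hα1 (by norm_num) (by norm_num)
    rw [hP4, hδ]
    norm_num at h ⊢
    exact h
  -- chain level 2
  have hT2 : ∀ d : ℝ, (1-δ) * (P1 * Aa α 2 d) ≤ T2f α d ∧
      T2f α d ≤ (1+δ) * (P1 * Aa α 2 d) := by
    intro d
    exact chain_step hα h1δ' (fun d => Aa_nonneg α 1 d) (show (0:ℝ) < 2 by norm_num)
      (fun d => (hA1 d).1) (fun d => (hA1 d).2) d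
  have hT2c : ∀ d : ℝ, (1-δ)^2 * ((P1*P2) * Real.exp (-α * d^2 / 3)) ≤ T2f α d ∧
      T2f α d ≤ (1+δ)^2 * ((P1*P2) * Real.exp (-α * d^2 / 3)) := by
    intro d
    have h1 := hT2 d
    have h2 := hA2 d
    constructor
    · calc (1-δ)^2 * ((P1*P2) * Real.exp (-α * d^2 / 3))
          = ((1-δ)*P1) * ((1-δ) * (P2 * Real.exp (-α * d^2 / 3))) := by ring
        _ ≤ ((1-δ)*P1) * Aa α 2 d :=
            mul_le_mul_of_nonneg_left h2.1 (mul_nonneg h1δ hP10)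
        _ = (1-δ) * (P1 * Aa α 2 d) := by ring
        _ ≤ T2f α d := h1.1
    · calc T2f α d ≤ (1+δ) * (P1 * Aa α 2 d) := h1.2
        _ = ((1+δ)*P1) * Aa α 2 d := by ring
        _ ≤ ((1+δ)*P1) * ((1+δ) * (P2 * Real.exp (-α * d^2 / 3))) :=
            mul_le_mul_of_nonneg_left h2.2 (mul_nonneg h1δ' hP10)
        _ = (1+δ)^2 * ((P1*P2) * Real.exp (-α * d^2 / 3)) := by ring
  -- chain level 3
  have hT3 : ∀ d : ℝ, (1-δ)^2 * ((P1*P2) * Aa α 3 d) ≤ T3f α d ∧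
      T3f α d ≤ (1+δ)^2 * ((P1*P2) * Aa α 3 d) := by
    intro d
    exact chain_step hα (by positivity) (fun d => T2f_nonneg α d) (show (0:ℝ) < 3 by norm_num)
      (fun d => (hT2c d).1) (fun d => (hT2c d).2) d
  have hT3c : ∀ d : ℝ, (1-δ)^3 * ((P1*P2*P3) * Real.exp (-α * d^2 / 4)) ≤ T3f α d ∧
      T3f α d ≤ (1+δ)^3 * ((P1*P2*P3) * Real.exp (-α * d^2 / 4)) := by
    intro d
    have h1 := hT3 d
    have h2 := hA3 d
    constructor
    · calc (1-δ)^3 * ((P1*P2*P3) * Real.exp (-α * d^2 / 4))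
          = ((1-δ)^2*(P1*P2)) * ((1-δ) * (P3 * Real.exp (-α * d^2 / 4))) := by ring
        _ ≤ ((1-δ)^2*(P1*P2)) * Aa α 3 d :=
            mul_le_mul_of_nonneg_left h2.1 (by positivity)
        _ = (1-δ)^2 * ((P1*P2) * Aa α 3 d) := by ring
        _ ≤ T3f α d := h1.1
    · calc T3f α d ≤ (1+δ)^2 * ((P1*P2) * Aa α 3 d) := h1.2
        _ = ((1+δ)^2*(P1*P2)) * Aa α 3 d := by ring
        _ ≤ ((1+δ)^2*(P1*P2)) * ((1+δ) * (P3 * Real.exp (-α * d^2 / 4))) :=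
            mul_le_mul_of_nonneg_left h2.2 (by positivity)
        _ = (1+δ)^3 * ((P1*P2*P3) * Real.exp (-α * d^2 / 4)) := by ring
  -- chain level 4
  have hT4 : (1-δ)^3 * ((P1*P2*P3) * Aa α 4 pr) ≤ T4f α pr ∧
      T4f α pr ≤ (1+δ)^3 * ((P1*P2*P3) * Aa α 4 pr) :=
    chain_step hα (by positivity) (fun d => T3f_nonneg α d) (show (0:ℝ) < 4 by norm_num)
      (fun d => (hT3c d).1) (fun d => (hT3c d).2) pr
  have hT4c : (1-δ)^4 * ((P1*P2*P3*P4) * Real.exp (-α * pr^2 / 5)) ≤ T4f α pr ∧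
      T4f α pr ≤ (1+δ)^4 * ((P1*P2*P3*P4) * Real.exp (-α * pr^2 / 5)) := by
    have h1 := hT4
    have h2 := hA4 pr
    constructor
    · calc (1-δ)^4 * ((P1*P2*P3*P4) * Real.exp (-α * pr^2 / 5))
          = ((1-δ)^3*(P1*P2*P3)) * ((1-δ) * (P4 * Real.exp (-α * pr^2 / 5))) := by ring
        _ ≤ ((1-δ)^3*(P1*P2*P3)) * Aa α 4 pr :=
            mul_le_mul_of_nonneg_left h2.1 (by positivity)
        _ = (1-δ)^3 * ((P1*P2*P3) * Aa α 4 pr) := by ring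
        _ ≤ T4f α pr := h1.1
    · calc T4f α pr ≤ (1+δ)^3 * ((P1*P2*P3) * Aa α 4 pr) := h1.2
        _ = ((1+δ)^3*(P1*P2*P3)) * Aa α 4 pr := by ring
        _ ≤ ((1+δ)^3*(P1*P2*P3)) * ((1+δ) * (P4 * Real.exp (-α * pr^2 / 5))) :=
            mul_le_mul_of_nonneg_left h2.2 (by positivity)
        _ = (1+δ)^4 * ((P1*P2*P3*P4) * Real.exp (-α * pr^2 / 5)) := by ring
  -- product of prefactors
  have h5 : Real.sqrt 5 ^ 2 = 5 := Real.sq_sqrt (by norm_num)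
  have h50 : 0 < Real.sqrt 5 := Real.sqrt_pos.2 (by norm_num)
  have hPP : P1*P2*P3*P4 = π^2/(Real.sqrt 5 * α^2) := by
    rw [hP1, hP2, hP3, hP4, ← Real.sqrt_mul (by positivity), ← Real.sqrt_mul (by positivity),
      ← Real.sqrt_mul (by positivity)]
    rw [show π * 1 / ((1+1) * α) * (π * 2 / ((2+1) * α)) * (π * 3 / ((3+1) * α))
        * (π * 4 / ((4+1) * α)) = (π^2/(Real.sqrt 5 * α^2))^2 from ?_]
    · exact Real.sqrt_sq (by positivity)
    · rw [div_pow, mul_pow, h5]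
      field_simp
      ring
  rw [hPP] at hT4c
  exact hT4c



def e4 : (Fin 4 → ℤ) ≃ ℤ×ℤ×ℤ×ℤ where
  toFun q := (q 0, q 1, q 2, q 3)
  invFun z := ![z.1, z.2.1, z.2.2.1, z.2.2.2]
  left_inv q := by funext i; fin_cases i <;> rfl
  right_inv z := rfl

lemma e4_apply (q : Fin 4 → ℤ) : e4 q = (q 0, q 1, q 2, q 3) := rfl

def psi (α pr : ℝ) (z : ℤ×ℤ×ℤ×ℤ) : ℝ :=
  Real.exp (-α * ((z.1:ℝ)^2 + (z.2.1:ℝ)^2 + (z.2.2.1:ℝ)^2 + (z.2.2.2:ℝ)^2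
    + (pr + (z.1:ℝ) + (z.2.1:ℝ) + (z.2.2.1:ℝ) + (z.2.2.2:ℝ))^2))

set_option maxHeartbeats 1000000 in
lemma psi_summable {α : ℝ} (hα : 0 < α) (pr : ℝ) : Summable (psi α pr) := by
  set w : ℤ → ℝ := fun n => Real.exp (-α * (n:ℝ)^2) with hw
  have w0 : ∀ n, 0 ≤ w n := fun n => (Real.exp_pos _).le
  have g1 : Summable w := summable_gauss_int hα
  have g2 : Summable (fun y : ℤ×ℤ => w y.1 * w y.2) := g1.mul_of_nonneg g1 w0 w0
  have g3 : Summable (fun y : ℤ×ℤ×ℤ => w y.1 * (w y.2.1 * w y.2.2)) :=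
    g1.mul_of_nonneg g2 w0 (fun y => mul_nonneg (w0 _) (w0 _))
  have g4 : Summable (fun y : ℤ×ℤ×ℤ×ℤ => w y.1 * (w y.2.1 * (w y.2.2.1 * w y.2.2.2))) :=
    g1.mul_of_nonneg g3 w0 (fun y => mul_nonneg (w0 _) (mul_nonneg (w0 _) (w0 _)))
  apply Summable.of_nonneg_of_le (fun z => (Real.exp_pos _).le) ?_ g4
  rintro ⟨z1, z2, z3, z4⟩
  simp only [psi, hw]
  rw [← Real.exp_add, ← Real.exp_add, ← Real.exp_add]
  apply Real.exp_le_exp.2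
  have h := mul_nonneg hα.le (sq_nonneg (pr + (z1:ℝ) + z2 + z3 + z4))
  nlinarith [h]

lemma tsum_psi_eq_T4f {α : ℝ} (hα : 0 < α) (pr : ℝ) :
    (∑' z : ℤ×ℤ×ℤ×ℤ, psi α pr z) = T4f α pr := by
  have hψ := psi_summable hα pr
  have inner1 : ∀ z1 z2 z3 : ℤ, (∑' z4 : ℤ, psi α pr (z1,z2,z3,z4))
      = Real.exp (-α * (z1:ℝ)^2) * (Real.exp (-α * (z2:ℝ)^2) * (Real.exp (-α * (z3:ℝ)^2) *
          Aa α 1 (pr + (z1:ℝ) + (z2:ℝ) + (z3:ℝ)))) := by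
    intro z1 z2 z3
    rw [Aa, ← tsum_mul_left, ← tsum_mul_left, ← tsum_mul_left]
    apply tsum_congr
    intro z4
    simp only [psi]
    rw [← Real.exp_add, ← Real.exp_add, ← Real.exp_add]
    congr 1
    ring
  have inner2 : ∀ z1 z2 : ℤ, (∑' s : ℤ×ℤ, psi α pr (z1,z2,s.1,s.2))
      = Real.exp (-α * (z1:ℝ)^2) * (Real.exp (-α * (z2:ℝ)^2) *
          T2f α (pr + (z1:ℝ) + (z2:ℝ))) := by
    intro z1 z2
    have hs : Summable (fun s : ℤ×ℤ => psi α pr (z1,z2,s.1,s.2)) := by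
      have := (hψ.prod_factor z1).prod_factor z2
      exact this.congr (fun s => rfl)
    rw [Summable.tsum_prod' hs (fun z3 => hs.prod_factor z3)]
    rw [T2f, ← tsum_mul_left, ← tsum_mul_left]
    exact tsum_congr (fun z3 => by rw [inner1 z1 z2 z3])
  have inner3 : ∀ z1 : ℤ, (∑' r : ℤ×ℤ×ℤ, psi α pr (z1,r.1,r.2.1,r.2.2))
      = Real.exp (-α * (z1:ℝ)^2) * T3f α (pr + (z1:ℝ)) := by
    intro z1
    have hr : Summable (fun r : ℤ×ℤ×ℤ => psi α pr (z1,r.1,r.2.1,r.2.2)) := by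
      have := hψ.prod_factor z1
      exact this.congr (fun r => rfl)
    rw [Summable.tsum_prod' hr (fun z2 => hr.prod_factor z2)]
    rw [T3f, ← tsum_mul_left]
    exact tsum_congr (fun z2 => by rw [inner2 z1 z2])
  rw [Summable.tsum_prod' hψ (fun z1 => hψ.prod_factor z1), T4f]
  exact tsum_congr (fun z1 => by
    rw [show (∑' r : ℤ×ℤ×ℤ, psi α pr (z1, r)) = ∑' r : ℤ×ℤ×ℤ, psi α pr (z1,r.1,r.2.1,r.2.2)
      from tsum_congr (fun r => rfl), inner3 z1])

lemma tsum_fin4_eq_T4f {α : ℝ} (hα : 0 < α) (pr : ℝ) :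
    (∑' q : Fin 4 → ℤ, Real.exp (-α * ((∑ i, ((q i : ℝ))^2) + (pr + ∑ i, (q i : ℝ))^2)))
      = T4f α pr := by
  rw [← tsum_psi_eq_T4f hα pr, ← e4.tsum_eq (psi α pr)]
  apply tsum_congr
  intro q
  simp only [psi, e4_apply, Fin.sum_univ_four]
  congr 1
  ring


lemma exp_taylor_bound {x : ℝ} (hx : 0 ≤ x) : |Real.exp (-x) - 1 + x| ≤ x^2 := by
  have h1 : 1 - x ≤ Real.exp (-x) := by
    have := Real.add_one_le_exp (-x); linarith
  have h2 : Real.exp (-x) ≤ 1/(1+x) := by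
    have h3 : 1 + x ≤ Real.exp x := by have := Real.add_one_le_exp x; linarith
    rw [Real.exp_neg]
    apply inv_anti₀ (by linarith) h3 |>.trans
    rw [one_div]
  have h4 : 1/(1+x) - 1 + x = x^2/(1+x) := by field_simp; ring
  have h5 : x^2/(1+x) ≤ x^2 := by
    apply div_le_self (sq_nonneg x) (by linarith)
  rw [abs_le]
  constructor <;> nlinarith

-- measurability of the theta-like inner sum
lemma measurable_H (m : ℝ) (Q : (Fin 4 → ℤ) → ℝ) :
    Measurable (fun α : ℝ => Real.exp (-α * m^2) *
      (∑' q : Fin 4 → ℤ, ENNReal.ofReal (Real.exp (-α * Q q))).toReal) := by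
  apply Measurable.mul
  · exact (measurable_id.neg.mul_const _).exp
  · apply ENNReal.measurable_toReal.comp
    apply Measurable.ennreal_tsum
    intro q
    exact ENNReal.measurable_ofReal.comp ((measurable_id.neg.mul_const _).exp)

lemma integral_M2 (c coef : ℝ) {ε : ℝ} (hε : 0 < ε) (hε1 : ε ≤ 1) :
    ∫ α in Set.Ioc ε 1, coef * ((α:ℝ)^(-2:ℤ) - c * α⁻¹)
      = coef * (ε⁻¹ - 1 + c * Real.log ε) := by
  rw [← intervalIntegral.integral_of_le hε1]
  have h0 : (0:ℝ) ∉ Set.uIcc ε 1 := by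
    rw [Set.uIcc_of_le hε1]
    intro h
    exact absurd h.1 (by linarith)
  have hint1 : IntervalIntegrable (fun x : ℝ => x^(-2:ℤ)) volume ε 1 :=
    intervalIntegral.intervalIntegrable_zpow (Or.inr h0)
  have hint2 : IntervalIntegrable (fun x : ℝ => x⁻¹) volume ε 1 := by
    apply intervalIntegral.intervalIntegrable_inv (f := fun x : ℝ => x)
    · intro x hx
      intro h; rw [h] at hx; exact h0 hx
    · exact continuousOn_id
  rw [intervalIntegral.integral_const_mul]
  congr 1
  rw [intervalIntegral.integral_sub hint1 (hint2.const_mul c),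
    intervalIntegral.integral_const_mul, integral_zpow (Or.inr ⟨by norm_num, h0⟩),
    integral_inv h0]
  have : (1:ℝ)/ε = ε⁻¹ := one_div ε
  rw [Real.log_div one_ne_zero (ne_of_gt hε), Real.log_one]
  norm_num
  ring

lemma fin4_summand_eq (α pr : ℝ) (q : Fin 4 → ℤ) :
    Real.exp (-α * ((∑ i, ((q i : ℝ))^2) + (pr + ∑ i, (q i : ℝ))^2)) = psi α pr (e4 q) := by
  simp only [psi, e4_apply, Fin.sum_univ_four]
  congr 1
  ring

lemma summable_fin4 {α : ℝ} (hα : 0 < α) (pr : ℝ) :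
    Summable (fun q : Fin 4 → ℤ =>
      Real.exp (-α * ((∑ i, ((q i : ℝ))^2) + (pr + ∑ i, (q i : ℝ))^2))) := by
  have h := (e4.summable_iff (f := psi α pr)).2 (psi_summable hα pr)
  exact h.congr (fun q => (fin4_summand_eq α pr q).symm)

lemma summable_statement {α : ℝ} (hα : 0 < α) (pr : ℝ) :
    Summable (fun q : Fin 4 → ℤ =>
      Real.exp (-α * (pr^2 + (∑ i, ((q i : ℝ))^2) + (pr + ∑ i, (q i : ℝ))^2))) := by
  apply ((summable_fin4 hα pr).mul_left (Real.exp (-α * pr^2))).congr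
  intro q
  rw [← Real.exp_add]
  congr 1
  ring

lemma statement_tsum_eq {α : ℝ} (hα : 0 < α) (pr : ℝ) :
    (∑' q : Fin 4 → ℤ,
        Real.exp (-α * (pr^2 + (∑ i, ((q i : ℝ))^2) + (pr + ∑ i, (q i : ℝ))^2)))
      = Real.exp (-α * pr^2) * T4f α pr := by
  rw [← tsum_fin4_eq_T4f hα pr, ← tsum_mul_left]
  apply tsum_congr
  intro q
  rw [← Real.exp_add]
  congr 1
  ring

lemma statement_nonneg (α pr : ℝ) :
    0 ≤ ∑' q : Fin 4 → ℤ,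
      Real.exp (-α * (pr^2 + (∑ i, ((q i : ℝ))^2) + (pr + ∑ i, (q i : ℝ))^2)) :=
  tsum_nonneg (fun q => (Real.exp_pos _).le)

lemma statement_mono {α β : ℝ} (pr : ℝ) (hβ : 0 < β) (hβα : β ≤ α) :
    (∑' q : Fin 4 → ℤ,
        Real.exp (-α * (pr^2 + (∑ i, ((q i : ℝ))^2) + (pr + ∑ i, (q i : ℝ))^2)))
      ≤ ∑' q : Fin 4 → ℤ,
        Real.exp (-β * (pr^2 + (∑ i, ((q i : ℝ))^2) + (pr + ∑ i, (q i : ℝ))^2)) := by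
  apply Summable.tsum_le_tsum _ (summable_statement (lt_of_lt_of_le hβ hβα) pr) (summable_statement hβ pr)
  intro q
  apply Real.exp_le_exp.2
  have h : (0:ℝ) ≤ pr^2 + (∑ i, ((q i : ℝ))^2) + (pr + ∑ i, (q i : ℝ))^2 := by positivity
  nlinarith

lemma delta_le_one {α : ℝ} (hα : 0 < α) (hα1 : α ≤ 1) : 4*Real.exp (-π^2/(2*α)) ≤ 1 := by
  have h3 : (3:ℝ) ≤ π := by linarith [Real.pi_gt_three]
  have h1 : (9:ℝ)/2 ≤ π^2/(2*α) := by
    rw [div_le_div_iff₀ (by norm_num) (by positivity)]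
    nlinarith
  have h2 : Real.exp (-π^2/(2*α)) ≤ Real.exp (-(9/2)) := by
    apply Real.exp_le_exp.2; rw [neg_div]; linarith
  have h5 : (11:ℝ)/2 ≤ Real.exp (9/2) := by
    have := Real.add_one_le_exp (9/2 : ℝ); linarith
  have h4 : Real.exp (-(9/2 : ℝ)) ≤ 2/11 := by
    rw [Real.exp_neg]
    calc (Real.exp (9/2 : ℝ))⁻¹ ≤ ((11:ℝ)/2)⁻¹ := by
          apply inv_anti₀ (by norm_num) h5
      _ ≤ 2/11 := by norm_num
  linarith

lemma delta_le_sq {α : ℝ} (hα : 0 < α) (hα1 : α ≤ 1) : 4*Real.exp (-π^2/(2*α)) ≤ α^2 := by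
  have h3 : (3:ℝ) ≤ π := by linarith [Real.pi_gt_three]
  have e1 : 1 + 2/α ≤ Real.exp (2/α) := by
    have := Real.add_one_le_exp (2/α); linarith
  have e2 : (2/α)^2 ≤ Real.exp (2/α) * Real.exp (2/α) := by
    nlinarith [div_pos (show (0:ℝ) < 2 by norm_num) hα]
  have e3 : Real.exp (2/α) * Real.exp (2/α) = Real.exp (4/α) := by
    rw [← Real.exp_add]; congr 1; ring
  have e4' : 4/α^2 ≤ Real.exp (4/α) := by
    rw [← e3]
    calc 4/α^2 = (2/α)^2 := by rw [div_pow]; norm_num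
      _ ≤ _ := e2
  have e5 : Real.exp (-(4/α)) ≤ α^2/4 := by
    rw [Real.exp_neg]
    rw [inv_le_iff_one_le_mul₀ (Real.exp_pos _)]
    calc (1:ℝ) = (4/α^2) * (α^2/4) := by field_simp
      _ ≤ Real.exp (4/α) * (α^2/4) := by
          apply mul_le_mul_of_nonneg_right e4' (by positivity)
      _ = α^2/4 * Real.exp (4/α) := by ring
  have e6 : Real.exp (-π^2/(2*α)) ≤ Real.exp (-(4/α)) := by
    apply Real.exp_le_exp.2
    rw [neg_div, neg_le_neg_iff, div_le_div_iff₀ (by positivity) (by positivity)]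
    nlinarith [mul_le_mul_of_nonneg_right (show (9:ℝ) ≤ π^2 by nlinarith) hα.le]
  linarith

set_option maxHeartbeats 1600000 in
lemma pointwise_bound {m pr : ℝ} (hm : 0 < m) {α : ℝ} (hα : 0 < α) (hα1 : α ≤ 1) :
    |Real.exp (-α * m^2) * (∑' q : Fin 4 → ℤ,
        Real.exp (-α * (pr^2 + (∑ i, ((q i : ℝ))^2) + (pr + ∑ i, (q i : ℝ))^2)))
      - (π^2/Real.sqrt 5) * ((α:ℝ)^(-2:ℤ) - (m^2 + 6/5*pr^2) * α⁻¹)|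
    ≤ 15 * (π^2/Real.sqrt 5) + (π^2/Real.sqrt 5) * (m^2 + 6/5*pr^2)^2 := by
  have h50 : (0:ℝ) < Real.sqrt 5 := Real.sqrt_pos.2 (by norm_num)
  set coef := π^2/Real.sqrt 5 with hcoef
  have hcoef0 : 0 < coef := by positivity
  set c := m^2 + 6/5*pr^2 with hc
  have hc0 : 0 < c := by rw [hc]; nlinarith [sq_nonneg pr, pow_pos hm 2]
  rw [statement_tsum_eq hα pr]
  set δ := 4*Real.exp (-π^2/(2*α)) with hδ
  have hδ0 : 0 ≤ δ := by positivity
  have hδ1 : δ ≤ 1 := delta_le_one hα hα1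
  have hδsq : δ ≤ α^2 := delta_le_sq hα hα1
  set K := π^2/(Real.sqrt 5 * α^2) * Real.exp (-α*pr^2/5) with hK
  have hK0 : 0 ≤ K := by positivity
  have hT := T4_bounds hα hα1 pr
  rw [← hδ, ← hK] at hT
  -- |T4f - K| ≤ 15 δ K
  have hd2 : δ^2 ≤ δ := by nlinarith
  have hd3 : δ^3 ≤ δ := by nlinarith [sq_nonneg δ]
  have hd4 : δ^4 ≤ δ := by nlinarith [sq_nonneg δ, sq_nonneg (δ^2)]
  have hup : (1+δ)^4 ≤ 1+15*δ := by nlinarith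
  have hlo : 1-15*δ ≤ (1-δ)^4 := by nlinarith
  have hTK : |T4f α pr - K| ≤ 15*δ*K := by
    rw [abs_le]
    constructor
    · have := mul_le_mul_of_nonneg_right hlo hK0
      nlinarith [hT.1]
    · have := mul_le_mul_of_nonneg_right hup hK0
      nlinarith [hT.2]
  -- identify the main term
  have hα2 : (α:ℝ)^2 ≠ 0 := pow_ne_zero 2 (ne_of_gt hα)
  have hMexp : Real.exp (-α*(m^2+pr^2)) * K = coef * (Real.exp (-(c*α)) * (α^2)⁻¹) := by
    rw [hK, hcoef, hc]
    rw [show -(((m:ℝ)^2 + 6/5*pr^2)*α) = -α*(m^2+pr^2) + -α*pr^2/5 by ring, Real.exp_add]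
    field_simp
  have hsplit : Real.exp (-α * m^2) * (Real.exp (-α * pr^2) * T4f α pr)
      = Real.exp (-α*(m^2+pr^2)) * T4f α pr := by
    rw [← mul_assoc, ← Real.exp_add,
      show -α*m^2 + -α*pr^2 = -α*(m^2+pr^2) from by ring]
  rw [hsplit]
  have hzpow : (α:ℝ)^(-2:ℤ) = (α^2)⁻¹ := by
    rw [zpow_neg, zpow_two, ← pow_two]
  rw [hzpow]
  -- triangle inequality
  have hexple : Real.exp (-α*(m^2+pr^2)) ≤ 1 := by
    rw [← Real.exp_zero]
    apply Real.exp_le_exp.2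
    nlinarith [sq_nonneg m, sq_nonneg pr]
  have hδK : δ*K ≤ coef := by
    rw [hK]
    have h1 : Real.exp (-α*pr^2/5) ≤ 1 := by
      rw [← Real.exp_zero]
      apply Real.exp_le_exp.2
      nlinarith [sq_nonneg pr]
    have h2 : π^2/(Real.sqrt 5 * α^2) = coef * (α^2)⁻¹ := by
      rw [hcoef]
      field_simp
    calc δ * (π^2/(Real.sqrt 5 * α^2) * Real.exp (-α*pr^2/5))
        ≤ δ * (π^2/(Real.sqrt 5 * α^2) * 1) := by
          apply mul_le_mul_of_nonneg_left _ hδ0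
          apply mul_le_mul_of_nonneg_left h1 (by positivity)
      _ = coef * (δ * (α^2)⁻¹) := by rw [h2]; ring
      _ ≤ coef * 1 := by
          apply mul_le_mul_of_nonneg_left _ hcoef0.le
          have h4 : δ*(α^2)⁻¹ ≤ α^2*(α^2)⁻¹ :=
            mul_le_mul_of_nonneg_right hδsq (by positivity)
          rwa [mul_inv_cancel₀ hα2] at h4
      _ = coef := mul_one _
  have ht1 : |Real.exp (-α*(m^2+pr^2)) * T4f α pr - Real.exp (-α*(m^2+pr^2)) * K|
      ≤ 15*coef := by
    rw [← mul_sub, abs_mul, _root_.abs_of_nonneg (Real.exp_pos _).le]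
    calc _ ≤ 1 * (15*δ*K) := mul_le_mul hexple hTK (abs_nonneg _) zero_le_one
      _ = 15*(δ*K) := by ring
      _ ≤ 15*coef := by linarith [hδK]
  have ht2 : |Real.exp (-α*(m^2+pr^2)) * K - coef * ((α^2)⁻¹ - c * α⁻¹)| ≤ coef * c^2 := by
    rw [hMexp]
    have hM2eq : coef * ((α^2)⁻¹ - c * α⁻¹) = coef * (α^2)⁻¹ * (1 - c*α) := by
      field_simp
    rw [hM2eq]
    have heq2 : coef * (Real.exp (-(c*α)) * (α^2)⁻¹) - coef * (α^2)⁻¹ * (1 - c*α)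
        = coef * (α^2)⁻¹ * (Real.exp (-(c*α)) - 1 + c*α) := by ring
    rw [heq2, abs_mul]
    have h3 := exp_taylor_bound (mul_nonneg hc0.le hα.le)
    calc |coef * (α^2)⁻¹| * |Real.exp (-(c*α)) - 1 + c*α|
        ≤ (coef * (α^2)⁻¹) * (c*α)^2 := by
          apply mul_le_mul ?_ h3 (abs_nonneg _) (by positivity)
          rw [_root_.abs_of_nonneg (by positivity)]
      _ = coef * c^2 * (α^2 * (α^2)⁻¹) := by ring
      _ = coef * c^2 := by rw [mul_inv_cancel₀ hα2, mul_one]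
  calc |Real.exp (-α*(m^2+pr^2)) * T4f α pr - coef * ((α^2)⁻¹ - c*α⁻¹)|
      ≤ |Real.exp (-α*(m^2+pr^2)) * T4f α pr - Real.exp (-α*(m^2+pr^2)) * K|
        + |Real.exp (-α*(m^2+pr^2)) * K - coef * ((α^2)⁻¹ - c*α⁻¹)| := abs_sub_le _ _ _
    _ ≤ 15*coef + coef*c^2 := add_le_add ht1 ht2

end

open Real Set

/-- Asymptotic expansion, in the Schwinger-parametric cutoff `Λ`, of the one-loop melonic
self-energy of the rank-6 quartic U(1) TGFT with closure constraint:
`∫_{1/Λ²}^∞ e^{-αm²} (∑_{q∈ℤ⁴} e^{-α(p² + |q|² + (p+S(q))²)}) dα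
  = (π²/√5)(Λ² - 2(m² + (6/5)p²) log Λ) + O(1)`. -/
theorem one_loop_self_energy_asymptotics (m : ℝ) (hm : 0 < m) (p : ℤ) :
    ∃ C : ℝ, 0 < C ∧ ∀ Λ : ℝ, 2 ≤ Λ →
      |(∫ α in Set.Ioi (1 / Λ ^ 2),
          Real.exp (-α * m ^ 2) *
            (∑' q : Fin 4 → ℤ,
              Real.exp (-α * ((p : ℝ) ^ 2 + (∑ i, (q i : ℝ) ^ 2)
                + ((p : ℝ) + ∑ i, (q i : ℝ)) ^ 2))))
        - (Real.pi ^ 2 / Real.sqrt 5) *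
            (Λ ^ 2 - 2 * (m ^ 2 + (6 / 5) * (p : ℝ) ^ 2) * Real.log Λ)| ≤ C := by
  set pr := (p : ℝ) with hpr
  set c := m ^ 2 + 6 / 5 * pr ^ 2 with hc
  set coef := Real.pi ^ 2 / Real.sqrt 5 with hcoef
  have h50 : (0:ℝ) < Real.sqrt 5 := Real.sqrt_pos.2 (by norm_num)
  have hcoef0 : 0 < coef := by rw [hcoef]; positivity
  set F : ℝ → ℝ := fun α => Real.exp (-α * m ^ 2) *
    (∑' q : Fin 4 → ℤ,
      Real.exp (-α * (pr ^ 2 + (∑ i, (q i : ℝ) ^ 2) + (pr + ∑ i, (q i : ℝ)) ^ 2))) with hF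
  set I1 : ℝ := ∑' q : Fin 4 → ℤ,
      Real.exp (-(1:ℝ) * (pr ^ 2 + (∑ i, (q i : ℝ) ^ 2) + (pr + ∑ i, (q i : ℝ)) ^ 2)) with hI1
  have hI10 : 0 ≤ I1 := statement_nonneg (1:ℝ) pr
  set CT : ℝ := ∫ α in Set.Ioi (1:ℝ), I1 * Real.exp (-m ^ 2 * α) with hCT
  have hCT0 : 0 ≤ CT := by
    rw [hCT]
    apply MeasureTheory.integral_nonneg
    intro α
    positivity
  refine ⟨1 + 15 * coef + coef * c ^ 2 + coef + CT, ?_, ?_⟩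
  · have := mul_nonneg hcoef0.le (sq_nonneg c)
    linarith
  intro Λ hΛ
  have hΛ0 : (0:ℝ) < Λ := by linarith
  set ε := 1 / Λ ^ 2 with hε
  have hε0 : 0 < ε := by rw [hε]; positivity
  have hε1 : ε ≤ 1 := by
    rw [hε, div_le_one (by positivity)]
    nlinarith
  -- measurability and integrability
  have hH_meas := measurable_H m
    (fun q : Fin 4 → ℤ => pr ^ 2 + (∑ i, (q i : ℝ) ^ 2) + (pr + ∑ i, (q i : ℝ)) ^ 2)
  have hFH : ∀ α : ℝ, 0 < α → F α = Real.exp (-α * m ^ 2) *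
      (∑' q : Fin 4 → ℤ, ENNReal.ofReal (Real.exp (-α *
        (pr ^ 2 + (∑ i, (q i : ℝ) ^ 2) + (pr + ∑ i, (q i : ℝ)) ^ 2)))).toReal := by
    intro α hα
    rw [hF]
    congr 1
    rw [← ENNReal.ofReal_tsum_of_nonneg (fun q => (Real.exp_pos _).le)
      (summable_statement hα pr), ENNReal.toReal_ofReal (statement_nonneg α pr)]
  have hioc_sub : Set.Ioc ε 1 ⊆ Set.Ioi ε := Set.Ioc_subset_Ioi_self
  have hioi_sub : Set.Ioi (1:ℝ) ⊆ Set.Ioi ε := Set.Ioi_subset_Ioi hε1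
  have hF_nonneg : ∀ α : ℝ, 0 ≤ F α := by
    intro α
    rw [hF]
    exact mul_nonneg (Real.exp_pos _).le (statement_nonneg α pr)
  set Iε : ℝ := ∑' q : Fin 4 → ℤ,
      Real.exp (-ε * (pr ^ 2 + (∑ i, (q i : ℝ) ^ 2) + (pr + ∑ i, (q i : ℝ)) ^ 2)) with hIε
  have hFle : ∀ α : ℝ, ε ≤ α → F α ≤ Iε * Real.exp (-m ^ 2 * α) := by
    intro α hα
    rw [hF, hIε]
    calc Real.exp (-α * m ^ 2) * (∑' q : Fin 4 → ℤ,
          Real.exp (-α * (pr ^ 2 + (∑ i, (q i : ℝ) ^ 2) + (pr + ∑ i, (q i : ℝ)) ^ 2)))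
        ≤ Real.exp (-α * m ^ 2) * (∑' q : Fin 4 → ℤ,
          Real.exp (-ε * (pr ^ 2 + (∑ i, (q i : ℝ) ^ 2) + (pr + ∑ i, (q i : ℝ)) ^ 2))) :=
          mul_le_mul_of_nonneg_left (statement_mono pr hε0 hα) (Real.exp_pos _).le
      _ = _ := by rw [show -α * m ^ 2 = -m ^ 2 * α from by ring]; ring
  have hInt : MeasureTheory.IntegrableOn F (Set.Ioi ε) := by
    apply MeasureTheory.Integrable.mono'
      ((exp_neg_integrableOn_Ioi ε (show (0:ℝ) < m ^ 2 by positivity)).const_mul Iε)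
    · apply hH_meas.aestronglyMeasurable.congr
      apply (MeasureTheory.ae_restrict_iff' measurableSet_Ioi).2
      apply MeasureTheory.ae_of_all
      intro α hα
      exact (hFH α (lt_trans hε0 hα)).symm
    · apply (MeasureTheory.ae_restrict_iff' measurableSet_Ioi).2
      apply MeasureTheory.ae_of_all
      intro α hα
      rw [Real.norm_eq_abs, _root_.abs_of_nonneg (hF_nonneg α)]
      exact hFle α (le_of_lt hα)
  have hsplit : (∫ α in Set.Ioi ε, F α)
      = (∫ α in Set.Ioc ε 1, F α) + ∫ α in Set.Ioi (1:ℝ), F α := by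
    rw [← MeasureTheory.setIntegral_union (Set.Ioc_disjoint_Ioi le_rfl) measurableSet_Ioi
      (hInt.mono_set hioc_sub) (hInt.mono_set hioi_sub), Set.Ioc_union_Ioi_eq_Ioi hε1]
  -- main region estimate
  have hmain : |(∫ α in Set.Ioc ε 1, F α) - coef * (ε⁻¹ - 1 + c * Real.log ε)|
      ≤ 15 * coef + coef * c ^ 2 := by
    rw [← integral_M2 c coef hε0 hε1]
    have h0 : (0:ℝ) ∉ Set.uIcc ε 1 := by
      rw [Set.uIcc_of_le hε1]
      intro h
      exact absurd h.1 (by linarith)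
    have hint1 : IntervalIntegrable (fun x : ℝ => x ^ (-2:ℤ)) MeasureTheory.volume ε 1 :=
      intervalIntegral.intervalIntegrable_zpow (Or.inr h0)
    have hint2 : IntervalIntegrable (fun x : ℝ => x⁻¹) MeasureTheory.volume ε 1 := by
      apply intervalIntegral.intervalIntegrable_inv (f := fun x : ℝ => x)
      · intro x hx
        intro h
        rw [h] at hx
        exact h0 hx
      · exact continuousOn_id
    have hM2int : MeasureTheory.IntegrableOn
        (fun α : ℝ => coef * ((α:ℝ) ^ (-2:ℤ) - c * α⁻¹)) (Set.Ioc ε 1) :=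
      ((hint1.sub (hint2.const_mul c)).const_mul coef).1
    rw [← MeasureTheory.integral_sub (hInt.mono_set hioc_sub) hM2int, ← Real.norm_eq_abs]
    calc ‖∫ α in Set.Ioc ε 1, (F α - coef * ((α:ℝ) ^ (-2:ℤ) - c * α⁻¹))‖
        ≤ (15 * coef + coef * c ^ 2) * (MeasureTheory.volume (Set.Ioc ε 1)).toReal := by
          apply MeasureTheory.norm_setIntegral_le_of_norm_le_const
          · rw [Real.volume_Ioc]
            exact ENNReal.ofReal_lt_top
          · intro x hx
            have hx0 : 0 < x := lt_trans hε0 hx.1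
            rw [Real.norm_eq_abs, hF]
            exact pointwise_bound (pr := pr) hm hx0 hx.2
      _ ≤ 15 * coef + coef * c ^ 2 := by
          rw [Real.volume_Ioc, ENNReal.toReal_ofReal (by linarith)]
          nlinarith [mul_nonneg hcoef0.le (sq_nonneg c)]
  -- tail estimate
  have htail : |∫ α in Set.Ioi (1:ℝ), F α| ≤ CT := by
    have hg1 : MeasureTheory.IntegrableOn (fun α : ℝ => I1 * Real.exp (-m ^ 2 * α))
        (Set.Ioi (1:ℝ)) :=
      (exp_neg_integrableOn_Ioi 1 (show (0:ℝ) < m ^ 2 by positivity)).const_mul I1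
    rw [← Real.norm_eq_abs]
    calc ‖∫ α in Set.Ioi (1:ℝ), F α‖ ≤ ∫ α in Set.Ioi (1:ℝ), ‖F α‖ :=
        MeasureTheory.norm_integral_le_integral_norm _
      _ ≤ ∫ α in Set.Ioi (1:ℝ), I1 * Real.exp (-m ^ 2 * α) := by
          apply MeasureTheory.setIntegral_mono_on
            ((hInt.mono_set hioi_sub).norm) hg1 measurableSet_Ioi
          intro x hx
          rw [Real.norm_eq_abs, _root_.abs_of_nonneg (hF_nonneg x)]
          have hx0 : (0:ℝ) < x := lt_trans one_pos hx
          rw [hF, hI1]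
          calc Real.exp (-x * m ^ 2) * (∑' q : Fin 4 → ℤ,
                Real.exp (-x * (pr ^ 2 + (∑ i, (q i : ℝ) ^ 2) + (pr + ∑ i, (q i : ℝ)) ^ 2)))
              ≤ Real.exp (-x * m ^ 2) * (∑' q : Fin 4 → ℤ,
                Real.exp (-(1:ℝ) * (pr ^ 2 + (∑ i, (q i : ℝ) ^ 2) + (pr + ∑ i, (q i : ℝ)) ^ 2))) :=
                mul_le_mul_of_nonneg_left (statement_mono pr one_pos (le_of_lt hx))
                  (Real.exp_pos _).le
            _ = _ := by rw [show -x * m ^ 2 = -m ^ 2 * x from by ring]; ring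
      _ = CT := by rw [hCT]
  -- put the pieces together
  have hεinv : ε⁻¹ = Λ ^ 2 := by rw [hε, one_div, inv_inv]
  have hlogε : Real.log ε = -(2 * Real.log Λ) := by
    rw [hε, one_div, Real.log_inv]
    congr 1
    rw [show Λ ^ 2 = Λ ^ (2:ℕ) from rfl, Real.log_pow]
    norm_num
  have hXeq : (∫ α in Set.Ioi ε, F α)
        - coef * (Λ ^ 2 - 2 * c * Real.log Λ)
      = ((∫ α in Set.Ioc ε 1, F α) - coef * (ε⁻¹ - 1 + c * Real.log ε))
        + (∫ α in Set.Ioi (1:ℝ), F α) + (-coef) := by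
    rw [hsplit, hεinv, hlogε]
    ring
  calc |(∫ α in Set.Ioi ε, F α) - coef * (Λ ^ 2 - 2 * c * Real.log Λ)|
      = |((∫ α in Set.Ioc ε 1, F α) - coef * (ε⁻¹ - 1 + c * Real.log ε))
        + (∫ α in Set.Ioi (1:ℝ), F α) + (-coef)| := by rw [hXeq]
    _ ≤ |(∫ α in Set.Ioc ε 1, F α) - coef * (ε⁻¹ - 1 + c * Real.log ε)|
        + |∫ α in Set.Ioi (1:ℝ), F α| + |(-coef)| := abs_add_three _ _ _
    _ ≤ (15 * coef + coef * c ^ 2) + CT + coef := by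
        have : |(-coef)| = coef := by rw [abs_neg, _root_.abs_of_nonneg hcoef0.le]
        rw [this]
        linarith [hmain, htail]
    _ ≤ 1 + 15 * coef + coef * c ^ 2 + coef + CT := by linarith
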